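/- Smoothness Argument: If a cost minimization game G is (λ,μ)-smooth under a sum-bounded social function SF, with λ > 0 and μ < 1, then for every pure Nash equilibrium σ and every social optimum o with SF(o) > 0, it holds that SF(σ) ≤ (λ/(1−μ))·SF(o). -/
import Mathlib

open Finset

/-- Smoothness Argument: if a cost minimization game is (λ,μ)-smooth
under a sum-bounded social function SF, with λ > 0 and μ < 1, then every pure Nash
equilibrium σ and social optimum o with SF(o) > 0 satisfy SF(σ) ≤ (λ/(1−μ))·SF(o). -/
theorem stmt10 {n : ℕ} {S : Fin n → Type} [∀ i, Fintype (S i)]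
    (c : ((i : Fin n) → S i) → Fin n → ℝ) (SF : ((i : Fin n) → S i) → ℝ)
    (hc : ∀ σ i, 0 ≤ c σ i) (hSFnn : ∀ σ, 0 ≤ SF σ)
    (hsb : ∀ σ, SF σ ≤ ∑ i, c σ i)
    (lam μ : ℝ) (hlam : 0 < lam) (hμ : μ < 1)
    (hsmooth : ∀ σ σ' : (i : Fin n) → S i,
      (∑ i, c (Function.update σ i (σ' i)) i) ≤ lam * SF σ' + μ * SF σ)
    (σ o : (i : Fin n) → S i)
    (hne : ∀ (i : Fin n) (x : S i), c σ i ≤ c (Function.update σ i x) i)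
    (hopt : ∀ τ, SF o ≤ SF τ) (ho : 0 < SF o) :
    SF σ ≤ (lam / (1 - μ)) * SF o := by
  have h1 : SF σ ≤ lam * SF o + μ * SF σ :=
    le_trans (hsb σ) (le_trans (Finset.sum_le_sum fun i _ => hne i (o i)) (hsmooth σ o))
  have h2 : (1 - μ) * SF σ ≤ lam * SF o := by linarith
  rw [div_mul_eq_mul_div, le_div_iff₀ (by linarith)]
  linarith
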